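/- Let X and Y be p×q real matrices such that every row of X has Euclidean norm at most γ and for every i ≤ p the Euclidean norm of the i-th row of X − Y is at most δ. Then for every i ≤ p, the Euclidean norm of the i-th row of X·Xᵀ − Y·Yᵀ is at most √p · (δ² + 2γδ). -/
import Mathlib

lemma cs_abs {q : ℕ} (a b : Fin q → ℝ) :
    |∑ t, a t * b t| ≤ Real.sqrt (∑ t, a t ^ 2) * Real.sqrt (∑ t, b t ^ 2) := by
  have h := Finset.sum_mul_sq_le_sq_mul_sq Finset.univ a b
  calc |∑ t, a t * b t| = Real.sqrt ((∑ t, a t * b t) ^ 2) := (Real.sqrt_sq_eq_abs _).symm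
    _ ≤ Real.sqrt ((∑ t, a t ^ 2) * ∑ t, b t ^ 2) := Real.sqrt_le_sqrt h
    _ = Real.sqrt (∑ t, a t ^ 2) * Real.sqrt (∑ t, b t ^ 2) :=
        Real.sqrt_mul (Finset.sum_nonneg fun t _ => sq_nonneg _) _

lemma sqrt_sum_sub_le {q : ℕ} (a b : Fin q → ℝ) :
    Real.sqrt (∑ t, (a t - b t) ^ 2) ≤
      Real.sqrt (∑ t, a t ^ 2) + Real.sqrt (∑ t, b t ^ 2) := by
  set A := ∑ t, a t ^ 2 with hA
  set B := ∑ t, b t ^ 2 with hB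
  have hA0 : 0 ≤ A := Finset.sum_nonneg fun t _ => sq_nonneg _
  have hB0 : 0 ≤ B := Finset.sum_nonneg fun t _ => sq_nonneg _
  have hcs : |∑ t, a t * b t| ≤ Real.sqrt A * Real.sqrt B := cs_abs a b
  have hsum : (∑ t, (a t - b t) ^ 2) ≤ (Real.sqrt A + Real.sqrt B) ^ 2 := by
    have hexp : (∑ t, (a t - b t) ^ 2) = A + B - 2 * ∑ t, a t * b t := by
      rw [hA, hB, ← Finset.sum_add_distrib, Finset.mul_sum, ← Finset.sum_sub_distrib]
      exact Finset.sum_congr rfl fun t _ => by ring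
    have h1 : Real.sqrt A ^ 2 = A := Real.sq_sqrt hA0
    have h2 : Real.sqrt B ^ 2 = B := Real.sq_sqrt hB0
    have habs := abs_le.mp hcs
    nlinarith [habs.1, habs.2]
  calc Real.sqrt (∑ t, (a t - b t) ^ 2) ≤ Real.sqrt ((Real.sqrt A + Real.sqrt B) ^ 2) :=
        Real.sqrt_le_sqrt hsum
    _ = Real.sqrt A + Real.sqrt B := Real.sqrt_sq (by positivity)

/-- Row-wise Gram-matrix perturbation bound: if every row of `X` has Euclidean
norm at most `γ` and every row of `X - Y` has Euclidean norm at most `δ`, then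
every row of `X·Xᵀ - Y·Yᵀ` has Euclidean norm at most `√p (δ² + 2γδ)`. -/
theorem stmt_1 {p q : ℕ} (X Y : Matrix (Fin p) (Fin q) ℝ) (γ δ : ℝ)
    (hγ : ∀ i, Real.sqrt (∑ t, (X i t) ^ 2) ≤ γ)
    (hδ : ∀ i, Real.sqrt (∑ t, (X i t - Y i t) ^ 2) ≤ δ) :
    ∀ i, Real.sqrt (∑ j, ((X * X.transpose - Y * Y.transpose) i j) ^ 2) ≤
      Real.sqrt p * (δ ^ 2 + 2 * γ * δ) := by
  intro i
  have hγ0 : 0 ≤ γ := le_trans (Real.sqrt_nonneg _) (hγ i)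
  have hδ0 : 0 ≤ δ := le_trans (Real.sqrt_nonneg _) (hδ i)
  have key : ∀ j, |(X * X.transpose - Y * Y.transpose) i j| ≤ δ ^ 2 + 2 * γ * δ := by
    intro j
    have hentry : (X * X.transpose - Y * Y.transpose) i j
        = (∑ t, X i t * (X j t - Y j t)) + ∑ t, (X i t - Y i t) * Y j t := by
      simp [Matrix.sub_apply, Matrix.mul_apply, Matrix.transpose_apply,
        ← Finset.sum_add_distrib, ← Finset.sum_sub_distrib]
      congr 1; ext t; ring
    have h1 : |∑ t, X i t * (X j t - Y j t)| ≤ γ * δ :=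
      le_trans (cs_abs _ _) (mul_le_mul (hγ i) (hδ j) (Real.sqrt_nonneg _) hγ0)
    have hYnorm : Real.sqrt (∑ t, (Y j t) ^ 2) ≤ γ + δ := by
      have : ∀ t, Y j t = X j t - (X j t - Y j t) := fun t => by ring
      calc Real.sqrt (∑ t, (Y j t) ^ 2)
          = Real.sqrt (∑ t, (X j t - (X j t - Y j t)) ^ 2) := by
            congr 1; exact Finset.sum_congr rfl fun t _ => by rw [← this t]
        _ ≤ Real.sqrt (∑ t, (X j t) ^ 2) + Real.sqrt (∑ t, (X j t - Y j t) ^ 2) :=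
            sqrt_sum_sub_le _ _
        _ ≤ γ + δ := add_le_add (hγ j) (hδ j)
    have h2 : |∑ t, (X i t - Y i t) * Y j t| ≤ δ * (γ + δ) :=
      le_trans (cs_abs _ _) (mul_le_mul (hδ i) hYnorm (Real.sqrt_nonneg _) hδ0)
    calc |(X * X.transpose - Y * Y.transpose) i j|
        ≤ |∑ t, X i t * (X j t - Y j t)| + |∑ t, (X i t - Y i t) * Y j t| := by
          rw [hentry]; exact abs_add_le _ _
      _ ≤ γ * δ + δ * (γ + δ) := add_le_add h1 h2
      _ = δ ^ 2 + 2 * γ * δ := by ring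
  have hsum : (∑ j, ((X * X.transpose - Y * Y.transpose) i j) ^ 2)
      ≤ p * (δ ^ 2 + 2 * γ * δ) ^ 2 := by
    calc (∑ j, ((X * X.transpose - Y * Y.transpose) i j) ^ 2)
        ≤ ∑ _j : Fin p, (δ ^ 2 + 2 * γ * δ) ^ 2 := by
          apply Finset.sum_le_sum
          intro j _
          have := key j
          nlinarith [abs_nonneg ((X * X.transpose - Y * Y.transpose) i j),
            sq_abs ((X * X.transpose - Y * Y.transpose) i j)]
      _ = p * (δ ^ 2 + 2 * γ * δ) ^ 2 := by simp [mul_comm]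
  calc Real.sqrt (∑ j, ((X * X.transpose - Y * Y.transpose) i j) ^ 2)
      ≤ Real.sqrt (p * (δ ^ 2 + 2 * γ * δ) ^ 2) := Real.sqrt_le_sqrt hsum
    _ = Real.sqrt p * (δ ^ 2 + 2 * γ * δ) := by
        rw [Real.sqrt_mul (by positivity), Real.sqrt_sq (by positivity)]
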